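/- Let $k \ge 1$ and $\bar{d} = (d_{r,s})$ with $d_{r,s} \in \mathbb{N}$ indexed by pairs $r < s$ in $[0,1]$. Set $D_{r,s} := 2^{d_{r,s}^k}$. If $f : V_1 \times \cdots \times V_{k+1} \to [0,1]$ satisfies $\mathrm{VC}_k(f) \le \bar{d}$ and $\sigma$ is a permutation of $[k+1]$, then the permuted function $f^{\sigma}(x_1,\ldots,x_{k+1}) := f(x_{\sigma(1)},\ldots,x_{\sigma(k+1)})$ satisfies $\mathrm{VC}_k(f^{\sigma}) \le \bar{D}$. -/

import Mathlib

/-- A box `A = A₁ × ⋯ × A_k` is `(r,s)`-shattered by `f : V₁ × ⋯ × V_{k+1} → ℝ` if for every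
subset `S` of the box there is `c ∈ V_{k+1}` with `f(ā, c) ≤ r` on `S` and `f(ā, c) ≥ s` on
the rest of the box. -/
def IsRSShattered {k : ℕ} {V : Fin (k + 1) → Type}
    (f : (∀ i, V i) → ℝ) (r s : ℝ) (A : ∀ i : Fin k, Set (V i.castSucc)) : Prop :=
  ∀ S : Set (∀ i : Fin k, V i.castSucc),
    (∀ a ∈ S, ∀ i, a i ∈ A i) →
    ∃ c : V (Fin.last k), ∀ a : ∀ i : Fin k, V i.castSucc,
      (∀ i, a i ∈ A i) →
        (a ∈ S → f (Fin.snoc a c) ≤ r) ∧ (a ∉ S → s ≤ f (Fin.snoc a c))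

/-- `VC_k(f) ≤ d̄`: for every pair `r < s` in `[0,1]`, no box with all sides of size
`d̄ r s` is `(r,s)`-shattered by `f`. -/
def VCkFunLE {k : ℕ} {V : Fin (k + 1) → Type}
    (f : (∀ i, V i) → ℝ) (d : ℝ → ℝ → ℕ) : Prop :=
  ∀ r s : ℝ, 0 ≤ r → r < s → s ≤ 1 →
    ∀ A : ∀ i : Fin k, Finset (V i.castSucc),
      (∀ i, (A i).card = d r s) → ¬ IsRSShattered f r s (fun i => ↑(A i))

private lemma cast_apply' {k : ℕ} {W : Fin k → Type} (b : ∀ i, W i) {i₁ i₂ : Fin k}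
    (h : i₁ = i₂) (hc : W i₁ = W i₂) : cast hc (b i₁) = b i₂ := by
  subst h; exact cast_eq _ _

private lemma cast_mem' {k : ℕ} {W : Fin k → Type} (A : ∀ i, Finset (W i)) {i₁ i₂ : Fin k}
    (h : i₁ = i₂) (hc : W i₁ = W i₂) {z : W i₁} (hz : z ∈ A i₁) : cast hc z ∈ A i₂ := by
  subst h; rwa [cast_eq]

private lemma cast_injective' {α β : Type} (h : α = β) : Function.Injective (cast h) := by
  intro x y hxy
  subst h
  rwa [cast_eq, cast_eq] at hxy

private lemma snoc_at_last {k : ℕ} {V : Fin (k+1) → Type} (b : ∀ m : Fin k, V m.castSucc)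
    (c : V (Fin.last k)) {m : Fin (k+1)} (h : m = Fin.last k) :
    Fin.snoc b c m = cast (congrArg V h.symm) c := by
  subst h; rw [Fin.snoc_last]; exact (cast_eq _ _).symm

/-- If `VC_k(f) ≤ d̄` then the function obtained from `f` by permuting its `k+1` variables by
`σ` satisfies `VC_k(f^σ) ≤ D̄` with `D̄_{r,s} = 2^{(d̄_{r,s})^k}`. -/
theorem stmt_16 {k : ℕ} (hk : 1 ≤ k) {V : Fin (k + 1) → Type}
    (f : (∀ i, V i) → ℝ) (hf01 : ∀ x, f x ∈ Set.Icc (0 : ℝ) 1)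
    (d : ℝ → ℝ → ℕ) (hd : VCkFunLE f d) (σ : Equiv.Perm (Fin (k + 1))) :
    VCkFunLE (fun x : ∀ i, V (σ i) => f ((Equiv.piCongrLeft V σ) x))
      (fun r s => 2 ^ ((d r s) ^ k)) := by
  classical
  intro r s hr hrs hs1 A hA hSh
  set d' := d r s with hd'def
  have hd'D : d' ≤ 2 ^ (d' ^ k) :=
    le_trans (Nat.le_self_pow (Nat.one_le_iff_ne_zero.mp hk) d') Nat.lt_two_pow_self.le
  by_cases hlast : σ (Fin.last k) = Fin.last k
  · -- easy case: the permutation fixes the last coordinate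
    have hne : ∀ i : Fin k, σ i.castSucc ≠ Fin.last k := by
      intro i h
      exact (Fin.castSucc_lt_last i).ne (σ.injective (h.trans hlast.symm))
    let π : Fin k → Fin k := fun i => (σ i.castSucc).castPred (hne i)
    have hinv_ne : ∀ m : Fin k, σ.symm m.castSucc ≠ Fin.last k := by
      intro m h
      have h2 : m.castSucc = σ (Fin.last k) := by rw [← h, Equiv.apply_symm_apply]
      exact (Fin.castSucc_lt_last m).ne (h2.trans hlast)
    let ρ : Fin k → Fin k := fun m => (σ.symm m.castSucc).castPred (hinv_ne m)
    have hπρ : ∀ m, π (ρ m) = m := by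
      intro m
      have h2 : (π (ρ m)).castSucc = m.castSucc := by
        show σ (σ.symm m.castSucc) = m.castSucc
        rw [Equiv.apply_symm_apply]
      exact Fin.castSucc_injective _ h2
    have hρπ : ∀ i, ρ (π i) = i := by
      intro i
      have h2 : (ρ (π i)).castSucc = i.castSucc := by
        show σ.symm (σ i.castSucc) = i.castSucc
        rw [Equiv.symm_apply_apply]
      exact Fin.castSucc_injective _ h2
    have hcast : ∀ m : Fin k, V (σ (ρ m).castSucc) = V m.castSucc := by
      intro m
      show V (σ (σ.symm m.castSucc)) = V m.castSucc
      rw [Equiv.apply_symm_apply]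
    let B0 : ∀ m : Fin k, Finset (V m.castSucc) := fun m =>
      (A (ρ m)).map (Equiv.cast (hcast m)).toEmbedding
    have hB0card : ∀ m, d' ≤ (B0 m).card := by
      intro m
      rw [Finset.card_map, hA]
      exact hd'D
    have hsub : ∀ m : Fin k, ∃ t ⊆ B0 m, t.card = d' := fun m =>
      Finset.exists_subset_card_eq (hB0card m)
    choose B hBsub hBcard using hsub
    refine hd r s hr hrs hs1 B hBcard ?_
    intro T hT
    let ψ : (∀ m : Fin k, V m.castSucc) → (∀ i : Fin k, V (σ i.castSucc)) := fun b i => b (π i)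
    let ρf : (∀ i : Fin k, V (σ i.castSucc)) → (∀ m : Fin k, V m.castSucc) :=
      fun a m => cast (hcast m) (a (ρ m))
    have hρψ : ∀ b, ρf (ψ b) = b := by
      intro b; funext m
      exact cast_apply' (W := fun m : Fin k => V m.castSucc) b (hπρ m) (hcast m)
    set S : Set (∀ i : Fin k, V (σ i.castSucc)) := { a | (∀ i, a i ∈ A i) ∧ ρf a ∈ T } with hS
    obtain ⟨cσ, hcσ⟩ := hSh S (fun a ha => ha.1)
    refine ⟨cast (congrArg V hlast) cσ, ?_⟩
    intro b hb
    have hab : ∀ i, ψ b i ∈ A i := by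
      intro i
      have hbB : b (π i) ∈ B0 (π i) := hBsub (π i) (hb (π i))
      rw [Finset.mem_map] at hbB
      obtain ⟨z, hz, hze⟩ := hbB
      have h3 : cast (hcast (π i)) z ∈ A i :=
        cast_mem' (W := fun i : Fin k => V (σ i.castSucc)) A (hρπ i) (hcast (π i)) hz
      have h4 : ψ b i = cast (hcast (π i)) z := hze.symm
      rw [h4]; exact h3
    have hkey : Fin.snoc b (cast (congrArg V hlast) cσ)
        = Equiv.piCongrLeft V σ (Fin.snoc (α := fun i => V (σ i)) (ψ b) cσ) := by
      have h2 : (Equiv.piCongrLeft V σ).symm (Fin.snoc b (cast (congrArg V hlast) cσ))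
          = Fin.snoc (α := fun i => V (σ i)) (ψ b) cσ := by
        funext i
        show Fin.snoc b (cast (congrArg V hlast) cσ) (σ i) = Fin.snoc (α := fun i => V (σ i)) (ψ b) cσ i
        refine Fin.lastCases ?_ ?_ i
        · rw [snoc_at_last b _ hlast, Fin.snoc_last (α := fun i => V (σ i)), cast_cast, cast_eq]
        · intro i'
          rw [Fin.snoc_castSucc (α := fun i => V (σ i))]
          show Fin.snoc b (cast (congrArg V hlast) cσ) ((π i').castSucc) = ψ b i'
          rw [Fin.snoc_castSucc]
      rw [← h2, Equiv.apply_symm_apply]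
    obtain ⟨h1, h2⟩ := hcσ (ψ b) hab
    rw [hkey]
    constructor
    · intro hbT
      exact h1 ⟨hab, by rw [hρψ]; exact hbT⟩
    · intro hbT
      refine h2 ?_
      intro hmem
      exact hbT (by rw [← hρψ b]; exact hmem.2)
  · -- hard case: dualization
    have hsymm_ne : σ.symm (Fin.last k) ≠ Fin.last k := by
      intro h
      exact hlast ((congrArg σ h).symm.trans (σ.apply_symm_apply _))
    set i₀ : Fin k := (σ.symm (Fin.last k)).castPred hsymm_ne with hi₀def
    have hσi₀ : σ i₀.castSucc = Fin.last k := by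
      show σ (σ.symm (Fin.last k)) = Fin.last k
      exact σ.apply_symm_apply _
    set jp : Fin k := (σ (Fin.last k)).castPred hlast with hjpdef
    have hne_last : ∀ i : Fin k, i ≠ i₀ → σ i.castSucc ≠ Fin.last k := by
      intro i hi h
      apply hi
      apply Fin.castSucc_injective
      show i.castSucc = σ.symm (Fin.last k)
      rw [← h, Equiv.symm_apply_apply]
    have hcard_i : ∀ i : Fin k, d' ≤ (A i).card := fun i => by rw [hA]; exact hd'D
    let u : ∀ i : Fin k, Fin d' → V (σ i.castSucc) := fun i t =>
      ((A i).equivFin.symm (Fin.castLE (hcard_i i) t)).val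
    have hu_mem : ∀ i t, u i t ∈ A i := fun i t => ((A i).equivFin.symm _).2
    have hu_inj : ∀ i, Function.Injective (u i) := by
      intro i t t' h
      exact Fin.castLE_injective _ ((A i).equivFin.symm.injective (Subtype.ext h))
    have hcardP : Fintype.card ((Fin k → Fin d') → Bool) = Fintype.card {x // x ∈ A i₀} := by
      rw [Fintype.card_coe, hA]
      simp [Fintype.card_fun]
      rfl
    let φ : ((Fin k → Fin d') → Bool) ≃ {x // x ∈ A i₀} := Fintype.equivOfCardEq hcardP
    let St : Fin d' → Set (∀ i : Fin k, V (σ i.castSucc)) := fun t =>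
      { a | ∃ v : Fin k → Fin d', v jp = t ∧
          (∀ i, ∀ hi : i ≠ i₀, a i = u i (v ((σ i.castSucc).castPred (hne_last i hi)))) ∧
          ∃ p : (Fin k → Fin d') → Bool, a i₀ = (φ p).val ∧ p v = true }
    have hStbox : ∀ t, ∀ a ∈ St t, ∀ i, a i ∈ A i := by
      rintro t a ⟨v, hv1, hv2, p, hp1, hp2⟩ i
      by_cases hi : i = i₀
      · subst hi; rw [hp1]; exact (φ p).2
      · rw [hv2 i hi]; exact hu_mem _ _
    choose c hc using fun t => hSh (St t) (hStbox t)
    have hc_inj : Function.Injective c := by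
      intro t t' hctt'
      by_contra hne2
      let p0 : (Fin k → Fin d') → Bool := fun w => decide (w jp = t)
      let a : ∀ i : Fin k, V (σ i.castSucc) := fun i =>
        if h : i = i₀ then cast (congrArg (fun z : Fin k => V (σ z.castSucc)) h.symm) (φ p0).val
        else u i t
      have ha_i₀ : a i₀ = (φ p0).val := by
        show dite _ _ _ = _
        rw [dif_pos rfl]
        exact cast_eq _ _
      have ha_ne : ∀ i, i ≠ i₀ → a i = u i t := fun i hi => dif_neg hi
      have ha_box : ∀ i, a i ∈ A i := by
        intro i
        by_cases hi : i = i₀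
        · subst hi; rw [ha_i₀]; exact (φ p0).2
        · rw [ha_ne i hi]; exact hu_mem i t
      have haS : a ∈ St t := ⟨fun _ => t, rfl, fun i hi => ha_ne i hi, p0, ha_i₀, by simp [p0]⟩
      have haS' : a ∉ St t' := by
        rintro ⟨v', hv1, hv2, p', hp1, hp2⟩
        have hpp : p' = p0 := φ.injective (Subtype.ext (hp1.symm.trans ha_i₀))
        rw [hpp] at hp2
        have h5 := of_decide_eq_true hp2
        rw [hv1] at h5
        exact hne2 h5.symm
      have h1 := (hc t a ha_box).1 haS
      have h2 := (hc t' a ha_box).2 haS'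
      rw [hctt'] at h1
      linarith
    have hm_ne : ∀ m : Fin k, m ≠ jp → σ.symm m.castSucc ≠ Fin.last k := by
      intro m hm h
      apply hm
      apply Fin.castSucc_injective
      show m.castSucc = σ (Fin.last k)
      rw [← h, Equiv.apply_symm_apply]
    let w : ∀ m : Fin k, Fin d' → V m.castSucc := fun m t =>
      if h : m = jp then cast (congrArg (fun z : Fin k => V z.castSucc) h.symm) (c t)
      else cast (congrArg V (σ.apply_symm_apply m.castSucc))
        (u ((σ.symm m.castSucc).castPred (hm_ne m h)) t)
    have hw_jp : ∀ t, w jp t = c t := by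
      intro t
      show dite _ _ _ = _
      rw [dif_pos rfl]
      exact cast_eq _ _
    have hw_ne : ∀ m (hm : m ≠ jp) t, w m t = cast (congrArg V (σ.apply_symm_apply m.castSucc))
        (u ((σ.symm m.castSucc).castPred (hm_ne m hm)) t) := fun m hm t => dif_neg hm
    have hw_inj : ∀ m, Function.Injective (w m) := by
      intro m
      by_cases hm : m = jp
      · subst hm
        intro t t' h
        rw [hw_jp, hw_jp] at h
        exact hc_inj h
      · intro t t' h
        rw [hw_ne m hm, hw_ne m hm] at h
        exact hu_inj _ (cast_injective' _ h)
    let B : ∀ m : Fin k, Finset (V m.castSucc) := fun m => Finset.image (w m) Finset.univ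
    have hBcard : ∀ m, (B m).card = d' := by
      intro m
      rw [Finset.card_image_of_injective _ (hw_inj m), Finset.card_univ, Fintype.card_fin]
    refine hd r s hr hrs hs1 B hBcard ?_
    intro T hT
    let pT : (Fin k → Fin d') → Bool := fun v => decide ((fun m => w m (v m)) ∈ T)
    set c' : V (Fin.last k) := cast (congrArg V hσi₀) (φ pT).val with hc'def
    refine ⟨c', ?_⟩
    intro b hb
    have hbv : ∀ m, ∃ t : Fin d', w m t = b m := by
      intro m
      obtain ⟨t, -, ht⟩ := Finset.mem_image.mp (Finset.mem_coe.mp (hb m))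
      exact ⟨t, ht⟩
    choose v hv using hbv
    have hbfun : (fun m => w m (v m)) = b := funext hv
    set x : ∀ i, V (σ i) := fun i => Fin.snoc b c' (σ i) with hxdef
    set aa : ∀ i : Fin k, V (σ i.castSucc) := Fin.init x with haadef
    set t₀ := v jp with ht₀def
    have hxlast : x (Fin.last k) = c t₀ := by
      show Fin.snoc b c' (jp.castSucc) = c t₀
      rw [Fin.snoc_castSucc, ← hv jp, hw_jp]
    have hval : f (Fin.snoc b c') = f (Equiv.piCongrLeft V σ
        (Fin.snoc (α := fun i => V (σ i)) aa (x (Fin.last k)))) := by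
      rw [haadef, Fin.snoc_init_self]
      show f (Fin.snoc b c') = f (Equiv.piCongrLeft V σ ((Equiv.piCongrLeft V σ).symm (Fin.snoc b c')))
      rw [Equiv.apply_symm_apply]
    have hval2 : f (Fin.snoc b c') = f (Equiv.piCongrLeft V σ
        (Fin.snoc (α := fun i => V (σ i)) aa (c t₀))) := by
      rw [hval, hxlast]
    have haai₀ : aa i₀ = (φ pT).val := by
      show Fin.snoc b c' (σ i₀.castSucc) = (φ pT).val
      rw [snoc_at_last b c' hσi₀, hc'def, cast_cast, cast_eq]
    have haane : ∀ i (hi : i ≠ i₀), aa i = u i (v ((σ i.castSucc).castPred (hne_last i hi))) := by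
      intro i hi
      set m := (σ i.castSucc).castPred (hne_last i hi) with hmdef
      have hmjp : m ≠ jp := by
        intro h
        have h6 : σ i.castSucc = σ (Fin.last k) := by
          show m.castSucc = σ (Fin.last k)
          rw [h]
          exact Fin.castSucc_castPred _ _
        exact (Fin.castSucc_lt_last i).ne (σ.injective h6)
      have h1 : aa i = b m := by
        show Fin.snoc b c' (m.castSucc) = b m
        rw [Fin.snoc_castSucc]
      rw [h1, ← hv m, hw_ne m hmjp]
      have hieq : ((σ.symm m.castSucc).castPred (hm_ne m hmjp)) = i := by
        apply Fin.castSucc_injective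
        show σ.symm (σ i.castSucc) = i.castSucc
        rw [Equiv.symm_apply_apply]
      exact cast_apply' (W := fun i' : Fin k => V (σ i'.castSucc)) (fun i' => u i' (v m)) hieq _
    have haabox : ∀ i, aa i ∈ A i := by
      intro i
      by_cases hi : i = i₀
      · subst hi; rw [haai₀]; exact (φ pT).2
      · rw [haane i hi]; exact hu_mem _ _
    obtain ⟨hle, hge⟩ := hc t₀ aa haabox
    constructor
    · intro hbT
      rw [hval2]
      apply hle
      refine ⟨v, rfl, haane, pT, haai₀, ?_⟩
      show decide ((fun m => w m (v m)) ∈ T) = true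
      rw [hbfun]
      exact decide_eq_true hbT
    · intro hbT
      rw [hval2]
      apply hge
      rintro ⟨v2, hv2jp, hv2, p2, hp2i₀, hp2v⟩
      have hp2 : p2 = pT := φ.injective (Subtype.ext (hp2i₀.symm.trans haai₀))
      have hv2v : v2 = v := by
        funext m
        by_cases hm : m = jp
        · subst hm
          rw [hv2jp]
        · set i := (σ.symm m.castSucc).castPred (hm_ne m hm) with hidef
          have hii₀ : i ≠ i₀ := by
            intro h
            have h2 : σ.symm m.castSucc = σ.symm (Fin.last k) := congrArg Fin.castSucc h
            exact (Fin.castSucc_lt_last m).ne (σ.symm.injective h2)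
          have hmi : (σ i.castSucc).castPred (hne_last i hii₀) = m := by
            apply Fin.castSucc_injective
            show σ (σ.symm m.castSucc) = m.castSucc
            rw [Equiv.apply_symm_apply]
          have e1 := haane i hii₀
          have e2 := hv2 i hii₀
          have e3 : v2 ((σ i.castSucc).castPred (hne_last i hii₀))
              = v ((σ i.castSucc).castPred (hne_last i hii₀)) :=
            hu_inj i (e2.symm.trans e1)
          rw [← hmi]
          exact e3
      rw [hp2, hv2v] at hp2v
      have h7 : (fun m => w m (v m)) ∈ T := of_decide_eq_true hp2v
      rw [hbfun] at h7
      exact hbT h7
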